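/- Let (Ψ_j)_{j≥1} be nonnegative real numbers and let c₀, c₁, c₂, B ≥ 0 be constants. Suppose (𝔸_ν)_{ν∈𝔉}, indexed by finitely supported multi-indices, are nonnegative real numbers satisfying: 𝔸_𝟎 ≤ B; 𝔸_{e_j} ≤ c₀ Ψ_j B for every j ≥ 1; and for every ν with |ν| ≥ 2, 𝔸_ν ≤ c₁ Σ_{j ∈ supp(ν)} ν_j Ψ_j 𝔸_{ν−e_j} + c₂ Σ_{j ∈ supp(ν)} Σ_{ℓ ∈ supp(ν−e_j)} ν_j (ν−e_j)_ℓ Ψ_j Ψ_ℓ 𝔸_{ν−e_j−e_ℓ}. Then for every finitely supported multi-index ν one has 𝔸_ν ≤ |ν|! · (∏_{j≥1} (C·Ψ_j)^{ν_j}) · B, where C := max{c₀, (c₁ + √(c₁² + 4c₂))/2}. -/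

import Mathlib

lemma myaux_sub_add {ν : ℕ →₀ ℕ} {j : ℕ} (h : 1 ≤ ν j) :
    ν - Finsupp.single j 1 + Finsupp.single j 1 = ν := by
  ext k
  simp only [Finsupp.add_apply, Finsupp.coe_tsub, Pi.sub_apply, Finsupp.single_apply]
  rcases eq_or_ne j k with rfl | hk
  · simp; omega
  · simp [hk]

lemma myaux_deg_sub {ν : ℕ →₀ ℕ} {j : ℕ} (h : 1 ≤ ν j) :
    (ν - Finsupp.single j 1).sum (fun _ n => n) + 1 = ν.sum (fun _ n => n) := by
  conv_rhs => rw [← myaux_sub_add h]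
  rw [Finsupp.sum_add_index' (fun _ => rfl) (fun _ _ _ => rfl),
    Finsupp.sum_single_index rfl]

lemma myaux_prod_sub (f : ℕ → ℝ) {ν : ℕ →₀ ℕ} {j : ℕ} (h : 1 ≤ ν j) :
    ((ν - Finsupp.single j 1).prod fun i n => (f i) ^ n) * f j
      = ν.prod fun i n => (f i) ^ n := by
  conv_rhs => rw [← myaux_sub_add h]
  rw [Finsupp.prod_add_index' (fun _ => pow_zero _) (fun _ _ _ => pow_add _ _ _)]
  simp

lemma myaux_deg_eq_zero {ν : ℕ →₀ ℕ} (h : ν.sum (fun _ n => n) = 0) : ν = 0 := by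
  rw [Finsupp.sum, Finset.sum_eq_zero_iff] at h
  ext k
  by_cases hk : k ∈ ν.support
  · exact h k hk
  · simpa using hk

lemma myaux_deg_eq_one {ν : ℕ →₀ ℕ} (h : ν.sum (fun _ n => n) = 1) :
    ∃ j, ν = Finsupp.single j 1 := by
  have hne : ν.support.Nonempty := by
    by_contra hc
    rw [Finset.not_nonempty_iff_eq_empty] at hc
    rw [Finsupp.sum, hc] at h; simp at h
  obtain ⟨j, hj⟩ := hne
  refine ⟨j, ?_⟩
  have hj1 : 1 ≤ ν j := Nat.one_le_iff_ne_zero.2 (Finsupp.mem_support_iff.1 hj)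
  have hle : ν j ≤ 1 := by
    rw [← h, Finsupp.sum]
    exact Finset.single_le_sum (fun _ _ => Nat.zero_le _) hj
  have hrest : ∀ k ∈ ν.support, k ≠ j → ν k = 0 := by
    intro k hk hkj
    by_contra hc
    have : 2 ≤ ν.sum (fun _ n => n) := by
      rw [Finsupp.sum]
      calc 2 ≤ ν j + ν k := by omega
      _ = ∑ i ∈ {j, k}, ν i := by rw [Finset.sum_pair (Ne.symm hkj)]
      _ ≤ _ := Finset.sum_le_sum_of_subset (by
          intro i hi; simp at hi; rcases hi with rfl | rfl <;> simp [Finsupp.mem_support_iff] <;> omega)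
    omega
  ext k
  rcases eq_or_ne k j with rfl | hkj
  · simp; omega
  · rw [show (Finsupp.single j 1 : ℕ →₀ ℕ) k = 0 from
      Finsupp.single_eq_of_ne' (fun hh => hkj hh.symm)]
    by_cases hk : k ∈ ν.support
    · exact hrest k hk hkj
    · simpa using hk

/-- Main induction, with abstract constant `C`. -/
lemma myaux_main (Ψ : ℕ → ℝ) (hΨ : ∀ j, 0 ≤ Ψ j)
    (c0 c1 c2 B C : ℝ) (hc0 : 0 ≤ c0) (hc1 : 0 ≤ c1) (hc2 : 0 ≤ c2) (hB : 0 ≤ B)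
    (hCc0 : c0 ≤ C) (hC : 0 ≤ C) (hCq : c1 * C + c2 ≤ C ^ 2)
    (hCz : C = 0 → c1 = 0 ∧ c2 = 0)
    (A : (ℕ →₀ ℕ) → ℝ) (hA : ∀ ν, 0 ≤ A ν)
    (h0 : A 0 ≤ B)
    (h1 : ∀ j : ℕ, A (Finsupp.single j 1) ≤ c0 * Ψ j * B)
    (h2 : ∀ ν : ℕ →₀ ℕ, 2 ≤ ν.sum (fun _ n => n) →
      A ν ≤
        c1 * ∑ j ∈ ν.support, (ν j : ℝ) * Ψ j * A ((ν - Finsupp.single j 1 : ℕ →₀ ℕ))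
        + c2 * ∑ j ∈ ν.support, ∑ l ∈ ((ν - Finsupp.single j 1 : ℕ →₀ ℕ)).support,
            (ν j : ℝ) * (((ν - Finsupp.single j 1 : ℕ →₀ ℕ)) l : ℝ) * Ψ j * Ψ l *
              A ((ν - Finsupp.single j 1 - Finsupp.single l 1 : ℕ →₀ ℕ))) :
    ∀ ν : ℕ →₀ ℕ,
      A ν ≤ (Nat.factorial (ν.sum (fun _ n => n)) : ℝ) *
        (ν.prod fun j n => (C * Ψ j) ^ n) * B := by
  have hPnn : ∀ μ : ℕ →₀ ℕ, 0 ≤ μ.prod fun i k => (C * Ψ i) ^ k := fun μ =>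
    Finset.prod_nonneg (fun i _ => pow_nonneg (mul_nonneg hC (hΨ i)) _)
  suffices H : ∀ n : ℕ, ∀ ν : ℕ →₀ ℕ, ν.sum (fun _ k => k) = n →
      A ν ≤ (Nat.factorial n : ℝ) * (ν.prod fun j k => (C * Ψ j) ^ k) * B by
    intro ν; exact H _ ν rfl
  intro n
  induction n using Nat.strong_induction_on with
  | _ n ih =>
    rcases n with _ | n
    · intro ν hν
      rw [myaux_deg_eq_zero hν]
      simpa using h0
    rcases n with _ | m
    · intro ν hν
      obtain ⟨j, rfl⟩ := myaux_deg_eq_one hν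
      have hps : ((Finsupp.single j 1 : ℕ →₀ ℕ).prod fun i k => (C * Ψ i) ^ k) = C * Ψ j := by
        simp
      rw [hps]
      calc A _ ≤ c0 * Ψ j * B := h1 j
        _ ≤ (Nat.factorial 1 : ℝ) * (C * Ψ j) * B := by
            simp only [Nat.factorial_one, Nat.cast_one, one_mul]
            nlinarith [mul_nonneg (mul_nonneg (sub_nonneg.2 hCc0) (hΨ j)) hB]
    -- main case: degree m + 2
    intro ν hν
    have key := h2 ν (by rw [hν]; omega)
    rcases eq_or_lt_of_le hC with hC0 | hC0
    · obtain ⟨hc1z, hc2z⟩ := hCz hC0.symm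
      rw [hc1z, hc2z] at key
      simp only [zero_mul, add_zero] at key
      calc A ν ≤ 0 := key
        _ ≤ _ := by
            exact mul_nonneg (mul_nonneg (Nat.cast_nonneg _) (hPnn ν)) hB
    · -- 0 < C
      have hνsupp : ∀ j ∈ ν.support, 1 ≤ ν j := fun j hj =>
        Nat.one_le_iff_ne_zero.2 (Finsupp.mem_support_iff.1 hj)
      have hcastsum : (∑ j ∈ ν.support, (ν j : ℝ)) = ((m : ℝ) + 2) := by
        rw [← Nat.cast_sum]
        rw [Finsupp.sum] at hν
        rw [hν]; push_cast; ring
      set X : ℝ := (ν.prod fun j k => (C * Ψ j) ^ k) with hXdef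
      -- bound the first sum
      have hS1 : ∑ j ∈ ν.support, (ν j : ℝ) * Ψ j * A ((ν - Finsupp.single j 1 : ℕ →₀ ℕ))
          ≤ ((m : ℝ) + 2) * (((m + 1).factorial : ℝ) * (X / C) * B) := by
        calc _ ≤ ∑ j ∈ ν.support, (ν j : ℝ) * (((m + 1).factorial : ℝ) * (X / C) * B) := by
              apply Finset.sum_le_sum
              intro j hj
              have hj1 := hνsupp j hj
              have hdegj : (ν - Finsupp.single j 1 : ℕ →₀ ℕ).sum (fun _ k => k) = m + 1 := by
                have := myaux_deg_sub hj1
                omega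
              have hIH := ih (m + 1) (by omega) _ hdegj
              have hprod := myaux_prod_sub (fun i => C * Ψ i) hj1
              have hPid : Ψ j * ((ν - Finsupp.single j 1 : ℕ →₀ ℕ).prod
                  fun i k => (C * Ψ i) ^ k) = X / C := by
                rw [eq_div_iff (ne_of_gt hC0)]
                linear_combination hprod
              calc (ν j : ℝ) * Ψ j * A ((ν - Finsupp.single j 1 : ℕ →₀ ℕ))
                  ≤ (ν j : ℝ) * Ψ j * (((m + 1).factorial : ℝ) *
                      ((ν - Finsupp.single j 1 : ℕ →₀ ℕ).prod fun i k => (C * Ψ i) ^ k) * B) := by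
                    exact mul_le_mul_of_nonneg_left hIH
                      (mul_nonneg (Nat.cast_nonneg _) (hΨ j))
                _ = (ν j : ℝ) * (((m + 1).factorial : ℝ) *
                      (Ψ j * ((ν - Finsupp.single j 1 : ℕ →₀ ℕ).prod fun i k => (C * Ψ i) ^ k)) * B) := by
                    ring
                _ = (ν j : ℝ) * (((m + 1).factorial : ℝ) * (X / C) * B) := by rw [hPid]
          _ = _ := by rw [← Finset.sum_mul, hcastsum]
      -- bound the second sum
      have hS2 : ∑ j ∈ ν.support, ∑ l ∈ ((ν - Finsupp.single j 1 : ℕ →₀ ℕ)).support,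
            (ν j : ℝ) * (((ν - Finsupp.single j 1 : ℕ →₀ ℕ)) l : ℝ) * Ψ j * Ψ l *
              A ((ν - Finsupp.single j 1 - Finsupp.single l 1 : ℕ →₀ ℕ))
          ≤ ((m : ℝ) + 2) * (((m : ℝ) + 1) * ((m.factorial : ℝ) * (X / C ^ 2) * B)) := by
        calc _ ≤ ∑ j ∈ ν.support, (ν j : ℝ) *
              (((m : ℝ) + 1) * ((m.factorial : ℝ) * (X / C ^ 2) * B)) := by
              apply Finset.sum_le_sum
              intro j hj
              have hj1 := hνsupp j hj
              set μ : ℕ →₀ ℕ := ν - Finsupp.single j 1 with hμdef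
              have hdegμ : μ.sum (fun _ k => k) = m + 1 := by
                have h' := myaux_deg_sub hj1 (ν := ν) (j := j)
                rw [← hμdef] at h'
                omega
              have hμsum : (∑ l ∈ μ.support, (μ l : ℝ)) = ((m : ℝ) + 1) := by
                rw [← Nat.cast_sum]
                rw [Finsupp.sum] at hdegμ
                rw [hdegμ]; push_cast; ring
              have hprodj := myaux_prod_sub (fun i => C * Ψ i) hj1
              calc ∑ l ∈ μ.support, (ν j : ℝ) * (μ l : ℝ) * Ψ j * Ψ l *
                    A ((μ - Finsupp.single l 1 : ℕ →₀ ℕ))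
                  ≤ ∑ l ∈ μ.support, (ν j : ℝ) * ((μ l : ℝ) *
                      ((m.factorial : ℝ) * (X / C ^ 2) * B)) := by
                    apply Finset.sum_le_sum
                    intro l hl
                    have hl1 : 1 ≤ μ l := Nat.one_le_iff_ne_zero.2 (Finsupp.mem_support_iff.1 hl)
                    have hdegl : (μ - Finsupp.single l 1 : ℕ →₀ ℕ).sum (fun _ k => k) = m := by
                      have := myaux_deg_sub hl1
                      omega
                    have hIH := ih m (by omega) _ hdegl
                    have hprodl := myaux_prod_sub (fun i => C * Ψ i) hl1
                    have hPid2 : Ψ j * Ψ l * ((μ - Finsupp.single l 1 : ℕ →₀ ℕ).prod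
                        fun i k => (C * Ψ i) ^ k) = X / C ^ 2 := by
                      rw [eq_div_iff (by positivity)]
                      have : ((μ - Finsupp.single l 1 : ℕ →₀ ℕ).prod fun i k => (C * Ψ i) ^ k)
                          * (C * Ψ l) * (C * Ψ j) = X := by
                        rw [hprodl]; exact hprodj
                      linear_combination this
                    calc (ν j : ℝ) * (μ l : ℝ) * Ψ j * Ψ l *
                          A ((μ - Finsupp.single l 1 : ℕ →₀ ℕ))
                        ≤ (ν j : ℝ) * (μ l : ℝ) * Ψ j * Ψ l * ((m.factorial : ℝ) *
                            ((μ - Finsupp.single l 1 : ℕ →₀ ℕ).prod fun i k => (C * Ψ i) ^ k) * B) := by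
                          exact mul_le_mul_of_nonneg_left hIH
                            (mul_nonneg (mul_nonneg (mul_nonneg (Nat.cast_nonneg _)
                              (Nat.cast_nonneg _)) (hΨ j)) (hΨ l))
                      _ = (ν j : ℝ) * ((μ l : ℝ) * ((m.factorial : ℝ) *
                            (Ψ j * Ψ l * ((μ - Finsupp.single l 1 : ℕ →₀ ℕ).prod
                              fun i k => (C * Ψ i) ^ k)) * B)) := by ring
                      _ = (ν j : ℝ) * ((μ l : ℝ) * ((m.factorial : ℝ) * (X / C ^ 2) * B)) := by
                          rw [hPid2]
                _ = (ν j : ℝ) * (((m : ℝ) + 1) * ((m.factorial : ℝ) * (X / C ^ 2) * B)) := by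
                    rw [← Finset.mul_sum, ← Finset.sum_mul, hμsum]
          _ = _ := by rw [← Finset.sum_mul, hcastsum]
      -- combine
      have hXnn : 0 ≤ X := hPnn ν
      have hfact : (((m + 2).factorial : ℝ)) = ((m : ℝ) + 2) * ((m : ℝ) + 1) * (m.factorial : ℝ) := by
        rw [Nat.factorial_succ, Nat.factorial_succ]
        push_cast; ring
      have hy : C * C⁻¹ = 1 := mul_inv_cancel₀ (ne_of_gt hC0)
      have hy0 : 0 ≤ C⁻¹ := by positivity
      have hstep : c1 * C⁻¹ + c2 * C⁻¹ ^ 2 ≤ 1 := by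
        have e1 := mul_le_mul_of_nonneg_right hCq (mul_nonneg hy0 hy0)
        have e2 : C ^ 2 * (C⁻¹ * C⁻¹) = 1 := by linear_combination (C * C⁻¹ + 1) * hy
        have e3 : c1 * C⁻¹ + c2 * C⁻¹ ^ 2 = (c1 * C + c2) * (C⁻¹ * C⁻¹) := by
          linear_combination (-(c1 * C⁻¹)) * hy
        calc c1 * C⁻¹ + c2 * C⁻¹ ^ 2 = (c1 * C + c2) * (C⁻¹ * C⁻¹) := e3
          _ ≤ C ^ 2 * (C⁻¹ * C⁻¹) := e1
          _ = 1 := e2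
      have hfin : c1 * (((m : ℝ) + 2) * (((m + 1).factorial : ℝ) * (X / C) * B))
            + c2 * (((m : ℝ) + 2) * (((m : ℝ) + 1) * ((m.factorial : ℝ) * (X / C ^ 2) * B)))
          ≤ (((m + 2).factorial : ℝ)) * X * B := by
        have hfact1 : (((m + 1).factorial : ℝ)) = ((m : ℝ) + 1) * (m.factorial : ℝ) := by
          rw [Nat.factorial_succ]; push_cast; ring
        calc _ = (((m + 2).factorial : ℝ)) * (X * B) * (c1 * C⁻¹ + c2 * C⁻¹ ^ 2) := by
              rw [hfact, hfact1, div_eq_mul_inv, div_eq_mul_inv]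
              ring
          _ ≤ (((m + 2).factorial : ℝ)) * (X * B) * 1 := by
              apply mul_le_mul_of_nonneg_left hstep
              exact mul_nonneg (Nat.cast_nonneg _) (mul_nonneg hXnn hB)
          _ = _ := by ring
      calc A ν ≤ _ := key
        _ ≤ c1 * (((m : ℝ) + 2) * (((m + 1).factorial : ℝ) * (X / C) * B))
            + c2 * (((m : ℝ) + 2) * (((m : ℝ) + 1) * ((m.factorial : ℝ) * (X / C ^ 2) * B))) := by
            apply add_le_add
            · exact mul_le_mul_of_nonneg_left hS1 hc1
            · exact mul_le_mul_of_nonneg_left hS2 hc2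
        _ ≤ (((m + 2).factorial : ℝ)) * X * B := hfin

theorem stmt1 (Ψ : ℕ → ℝ) (hΨ : ∀ j, 0 ≤ Ψ j)
    (c0 c1 c2 B : ℝ) (hc0 : 0 ≤ c0) (hc1 : 0 ≤ c1) (hc2 : 0 ≤ c2) (hB : 0 ≤ B)
    (A : (ℕ →₀ ℕ) → ℝ) (hA : ∀ ν, 0 ≤ A ν)
    (h0 : A 0 ≤ B)
    (h1 : ∀ j : ℕ, A (Finsupp.single j 1) ≤ c0 * Ψ j * B)
    (h2 : ∀ ν : ℕ →₀ ℕ, 2 ≤ ν.sum (fun _ n => n) →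
      A ν ≤
        c1 * ∑ j ∈ ν.support, (ν j : ℝ) * Ψ j * A ((ν - Finsupp.single j 1 : ℕ →₀ ℕ))
        + c2 * ∑ j ∈ ν.support, ∑ l ∈ ((ν - Finsupp.single j 1 : ℕ →₀ ℕ)).support,
            (ν j : ℝ) * (((ν - Finsupp.single j 1 : ℕ →₀ ℕ)) l : ℝ) * Ψ j * Ψ l *
              A ((ν - Finsupp.single j 1 - Finsupp.single l 1 : ℕ →₀ ℕ))) :
    ∀ ν : ℕ →₀ ℕ,
      A ν ≤ (Nat.factorial (ν.sum (fun _ n => n)) : ℝ) *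
        (ν.prod fun j n => (max c0 ((c1 + Real.sqrt (c1 ^ 2 + 4 * c2)) / 2) * Ψ j) ^ n) * B := by
  set C := max c0 ((c1 + Real.sqrt (c1 ^ 2 + 4 * c2)) / 2) with hCdef
  have hs0 : 0 ≤ Real.sqrt (c1 ^ 2 + 4 * c2) := Real.sqrt_nonneg _
  have hs2 : Real.sqrt (c1 ^ 2 + 4 * c2) ^ 2 = c1 ^ 2 + 4 * c2 := Real.sq_sqrt (by positivity)
  have hCc0 : c0 ≤ C := le_max_left _ _
  have hCr : (c1 + Real.sqrt (c1 ^ 2 + 4 * c2)) / 2 ≤ C := le_max_right _ _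
  have hC : 0 ≤ C := le_trans hc0 hCc0
  have hCq : c1 * C + c2 ≤ C ^ 2 := by nlinarith [hs2, hs0, hCr]
  have hCz : C = 0 → c1 = 0 ∧ c2 = 0 := by
    intro hz
    rw [hz] at hCr
    constructor
    · linarith
    · nlinarith [hs2, hs0, hCr, hc1]
  exact myaux_main Ψ hΨ c0 c1 c2 B C hc0 hc1 hc2 hB hCc0 hC hCq hCz A hA h0 h1 h2
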